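/- Let W be symmetric doubly stochastic with spectral gap ρ, let γ ∈ (0,1], and C = ‖W − I‖². For matrices X, H, V ∈ R^{d×n} with x̄ = (1/n)X𝟏 and v̄ = (1/n)V𝟏, and X⁺ = X + γH(W − I) − ηV, it holds that ‖X⁺ − x̄⁺𝟏ᵀ‖_F² ≤ (1 − γρ/2)‖X − x̄𝟏ᵀ‖_F² + (6γC/ρ)‖H − X‖_F² + (6η²/(γρ))‖V − v̄𝟏ᵀ‖_F², where x̄⁺ = (1/n)X⁺𝟏. -/

import Mathlib

open Finset Matrix
open scoped RealInnerProductSpace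

lemma norm_sq_eq_sum' (n : ℕ) (u : EuclideanSpace ℝ (Fin n)) : ‖u‖ ^ 2 = ∑ j, (u j) ^ 2 := by
  rw [← real_inner_self_eq_norm_sq]
  simp [PiLp.inner_apply]
  rw [EuclideanSpace.norm_sq_eq]
  simp [Real.norm_eq_abs, sq_abs]

lemma young_ineq' {F : Type*} [NormedAddCommGroup F] [InnerProductSpace ℝ F]
    (a b : F) (β : ℝ) (hβ : 0 < β) :
    ‖a + b‖ ^ 2 ≤ (1 + β) * ‖a‖ ^ 2 + (1 + 1/β) * ‖b‖ ^ 2 := by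
  have h1 : ⟪a, b⟫ ≤ ‖a‖ * ‖b‖ := real_inner_le_norm a b
  have h2 : ‖a + b‖ ^ 2 = ‖a‖ ^ 2 + 2 * ⟪a, b⟫ + ‖b‖ ^ 2 := norm_add_sq_real a b
  have h3 : 2 * (‖a‖ * ‖b‖) ≤ β * ‖a‖ ^ 2 + (1/β) * ‖b‖ ^ 2 := by
    rw [← sub_nonneg]
    have h4 : β * ‖a‖ ^ 2 + (1/β) * ‖b‖ ^ 2 - 2 * (‖a‖ * ‖b‖) = (β * ‖a‖ - ‖b‖) ^ 2 / β := by
      field_simp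
      ring
    rw [h4]
    positivity
  rw [h2]
  linarith
lemma contraction_lemma (n : ℕ) (W : Matrix (Fin n) (Fin n) ℝ) (hherm : W.IsHermitian)
    (hrow : W *ᵥ (fun _ => 1) = fun _ => 1)
    (ρ γ : ℝ) (hρ0 : 0 < ρ) (hρ1 : ρ ≤ 1) (hγ0 : 0 < γ) (hγ1 : γ ≤ 1)
    (i₀ : Fin n) (hi₀ : hherm.eigenvalues i₀ = 1)
    (hgap' : ∀ i, i ≠ i₀ → |hherm.eigenvalues i| ≤ 1 - ρ)
    (u : EuclideanSpace ℝ (Fin n)) (hu : ∑ j, u j = 0) :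
    ‖u + γ • (Matrix.toEuclideanCLM (𝕜 := ℝ) (W - 1)) u‖ ^ 2 ≤
      (1 - γ * ρ) ^ 2 * ‖u‖ ^ 2 := by
  set e := hherm.eigenvectorBasis with he
  set μ := hherm.eigenvalues with hμ
  set TW := Matrix.toEuclideanCLM (𝕜 := ℝ) W with hTW
  set T := Matrix.toEuclideanCLM (𝕜 := ℝ) (W - 1) with hT
  have hWe : ∀ i, TW (e i) = μ i • e i := by
    intro i
    ext j
    have := congrFun (hherm.mulVec_eigenvectorBasis i) j
    simpa [hTW, he, hμ] using this
  have hsymW : ∀ x y : EuclideanSpace ℝ (Fin n), ⟪TW x, y⟫ = ⟪x, TW y⟫ :=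
    fun x y => (Matrix.isHermitian_iff_isSymmetric.mp hherm) x y
  have hsymT : ∀ x y : EuclideanSpace ℝ (Fin n), ⟪T x, y⟫ = ⟪x, T y⟫ :=
    fun x y => (Matrix.isHermitian_iff_isSymmetric.mp (hherm.sub Matrix.isHermitian_one)) x y
  have hTsub : ∀ w : EuclideanSpace ℝ (Fin n), T w = TW w - w := by
    intro w
    rw [hT, hTW, map_sub, _root_.map_one]
    simp
  have hTe : ∀ i, T (e i) = (μ i - 1) • e i := by
    intro i
    rw [hTsub, hWe i, sub_smul, one_smul]
  -- ones vector
  set ones : EuclideanSpace ℝ (Fin n) := (WithLp.equiv 2 (Fin n → ℝ)).symm (fun _ => 1) with hones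
  have hWones : TW ones = ones := by
    ext j
    have := congrFun hrow j
    simpa [hTW, hones] using this
  have hμne : ∀ i, i ≠ i₀ → μ i ≠ 1 := by
    intro i hi
    have := hgap' i hi
    have h := abs_le.mp this
    intro hcon
    rw [hcon] at h
    linarith [h.2]
  have hinner_ones : ∀ i, i ≠ i₀ → ⟪e i, ones⟫ = 0 := by
    intro i hi
    have h1 : ⟪TW (e i), ones⟫ = μ i * ⟪e i, ones⟫ := by
      rw [hWe i, real_inner_smul_left]
    have h2 : ⟪TW (e i), ones⟫ = ⟪e i, ones⟫ := by rw [hsymW, hWones]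
    have h3 : (μ i - 1) * ⟪e i, ones⟫ = 0 := by rw [sub_mul]; rw [h1] at h2; linarith
    rcases mul_eq_zero.mp h3 with h4 | h4
    · exact absurd (by linarith : μ i = 1) (hμne i hi)
    · exact h4
  have hn : 0 < n := Fin.pos i₀
  -- ones = c • e i₀
  have hones_expand : ones = ⟪e i₀, ones⟫ • e i₀ := by
    conv_lhs => rw [← e.sum_repr ones]
    rw [Finset.sum_eq_single i₀]
    · rw [e.repr_apply_apply]
    · intro i _ hi
      rw [e.repr_apply_apply]
      simp [hinner_ones i hi]
    · intro h; exact absurd (Finset.mem_univ i₀) h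
  have hc_ne : ⟪e i₀, ones⟫ ≠ 0 := by
    intro hc
    rw [hc, zero_smul] at hones_expand
    have : ‖ones‖ ^ 2 = (0:ℝ) := by rw [hones_expand]; simp
    rw [norm_sq_eq_sum'] at this
    have : (n : ℝ) = 0 := by
      simpa [hones] using this
    exact absurd this (by positivity)
  have hui₀ : ⟪e i₀, u⟫ = 0 := by
    have h1 : ⟪ones, u⟫ = 0 := by
      simp [PiLp.inner_apply, hones, hu]
    rw [hones_expand, real_inner_smul_left] at h1
    rcases mul_eq_zero.mp h1 with h | h
    · exact absurd h hc_ne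
    · exact h
  -- Parseval
  have hpars : ∀ w : EuclideanSpace ℝ (Fin n), ‖w‖ ^ 2 = ∑ i, ⟪e i, w⟫ ^ 2 := by
    intro w
    rw [← e.repr.norm_map w, norm_sq_eq_sum']
    exact Finset.sum_congr rfl fun i _ => by rw [e.repr_apply_apply]
  set a : EuclideanSpace ℝ (Fin n) := u + γ • T u with ha
  have hcoef : ∀ i, ⟪e i, a⟫ = (1 + γ * (μ i - 1)) * ⟪e i, u⟫ := by
    intro i
    rw [ha, inner_add_right, real_inner_smul_right, ← hsymT, hTe i, real_inner_smul_left]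
    ring
  rw [hpars a, hpars u, Finset.mul_sum]
  apply Finset.sum_le_sum
  intro i _
  rw [hcoef i]
  by_cases hii : i = i₀
  · rw [hii, hui₀]
    simp
  · have habs := abs_le.mp (hgap' i hii)
    have hb : |1 + γ * (μ i - 1)| ≤ 1 - γ * ρ := by
      rw [abs_le]
      constructor
      · nlinarith [mul_le_mul_of_nonneg_left habs.1 hγ0.le]
      · nlinarith [mul_le_mul_of_nonneg_left habs.2 hγ0.le]
    have hsq : (1 + γ * (μ i - 1)) ^ 2 ≤ (1 - γ * ρ) ^ 2 := by
      have := abs_nonneg (1 + γ * (μ i - 1))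
      nlinarith [sq_abs (1 + γ * (μ i - 1))]
    calc ((1 + γ * (μ i - 1)) * ⟪e i, u⟫) ^ 2
        = (1 + γ * (μ i - 1)) ^ 2 * ⟪e i, u⟫ ^ 2 := by ring
      _ ≤ (1 - γ * ρ) ^ 2 * ⟪e i, u⟫ ^ 2 := by
          exact mul_le_mul_of_nonneg_right hsq (sq_nonneg _)

lemma k1aux (t : ℝ) (ht0 : 0 < t) (ht1 : t ≤ 1) :
    (1 + t/2) * (1 - t) ^ 2 ≤ 1 - t/2 := by
  have h2 : t * t ≤ 1 := by nlinarith
  nlinarith [mul_le_mul_of_nonneg_left h2 ht0.le]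

lemma k3aux (t c : ℝ) (ht0 : 0 < t) (ht1 : t ≤ 1) (hc : 0 ≤ c) :
    (1 + 1/(t/2)) * (2 * c) ≤ 6 * c / t := by
  rw [le_div_iff₀ ht0]
  have h2 : (1 + 1/(t/2)) = (t + 2) / t := by
    field_simp
  rw [h2, div_mul_eq_mul_div, div_mul_eq_mul_div, div_le_iff₀ ht0]
  nlinarith [mul_nonneg hc ht0.le]

lemma k2aux (γ ρ c : ℝ) (hγ0 : 0 < γ) (hρ0 : 0 < ρ) (ht1 : γ * ρ ≤ 1) (hc : 0 ≤ c) :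
    (1 + 1/(γ * ρ / 2)) * (2 * γ ^ 2 * c) ≤ 6 * γ * c / ρ := by
  have h := k3aux (γ * ρ) (γ ^ 2 * c) (mul_pos hγ0 hρ0) ht1 (mul_nonneg (sq_nonneg γ) hc)
  calc (1 + 1/(γ * ρ / 2)) * (2 * γ ^ 2 * c)
      = (1 + 1/(γ * ρ / 2)) * (2 * (γ ^ 2 * c)) := by ring
    _ ≤ 6 * (γ ^ 2 * c) / (γ * ρ) := h
    _ = 6 * γ * c / ρ := by
        field_simp

set_option maxHeartbeats 1000000 in
/-- One-step consensus error recursion for the BEER model update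
X⁺ = X + γH(W - I) - ηV. -/
theorem beer_consensus_error_recursion
    (n d : ℕ) (W : Matrix (Fin n) (Fin n) ℝ)
    (hherm : W.IsHermitian)
    (h01 : ∀ i j, W i j ∈ Set.Icc (0 : ℝ) 1)
    (hrow : W *ᵥ (fun _ => 1) = fun _ => 1)
    (hcol : (fun _ => (1 : ℝ)) ᵥ* W = fun _ => 1)
    (ρ : ℝ) (hρ : ρ ∈ Set.Ioc (0 : ℝ) 1)
    (hgap : ∃ i₀ : Fin n, hherm.eigenvalues i₀ = 1 ∧
      ∀ i, i ≠ i₀ → |hherm.eigenvalues i| ≤ 1 - ρ)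
    (γ η : ℝ) (hγ : γ ∈ Set.Ioc (0 : ℝ) 1) (hη : 0 < η)
    (C : ℝ)
    (hC : C = ‖(Matrix.toEuclideanCLM (𝕜 := ℝ) (W - 1) :
      EuclideanSpace ℝ (Fin n) →L[ℝ] EuclideanSpace ℝ (Fin n))‖ ^ 2)
    (X H V Xp : Matrix (Fin d) (Fin n) ℝ)
    (hXp : Xp = X + γ • (H * (W - 1)) - η • V)
    (xbar vbar xbarp : Fin d → ℝ)
    (hxbar : xbar = fun i => (1 / n) * ∑ j, X i j)
    (hvbar : vbar = fun i => (1 / n) * ∑ j, V i j)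
    (hxbarp : xbarp = fun i => (1 / n) * ∑ j, Xp i j) :
    ∑ i, ∑ j, (Xp i j - xbarp i) ^ 2 ≤
      (1 - γ * ρ / 2) * ∑ i, ∑ j, (X i j - xbar i) ^ 2
      + (6 * γ * C / ρ) * ∑ i, ∑ j, (H i j - X i j) ^ 2
      + (6 * η ^ 2 / (γ * ρ)) * ∑ i, ∑ j, (V i j - vbar i) ^ 2 := by
  obtain ⟨hρ0, hρ1⟩ := hρ
  obtain ⟨hγ0, hγ1⟩ := hγ
  obtain ⟨i₀, hi₀, hgap'⟩ := hgap
  have hn : 0 < n := Fin.pos i₀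
  have hn' : (n : ℝ) ≠ 0 := by positivity
  set T := Matrix.toEuclideanCLM (𝕜 := ℝ) (W - 1) with hT
  set TW := Matrix.toEuclideanCLM (𝕜 := ℝ) W with hTW
  have hTsub : ∀ w : EuclideanSpace ℝ (Fin n), T w = TW w - w := by
    intro w
    rw [hT, hTW, map_sub, _root_.map_one]
    simp
  set ones : EuclideanSpace ℝ (Fin n) := (WithLp.equiv 2 (Fin n → ℝ)).symm (fun _ => 1)
    with hones
  have hWones : TW ones = ones := by
    ext j
    have := congrFun hrow j
    simpa [hTW, hones] using this
  have hTones : T ones = 0 := by rw [hTsub, hWones, sub_self]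
  have hWsym : ∀ a b, W a b = W b a := by
    intro a b
    have := congrFun (congrFun hherm.eq a) b
    simpa [Matrix.conjTranspose_apply] using this.symm
  have hrowsum : ∀ k, ∑ j, (W - 1) k j = 0 := by
    intro k
    have := congrFun hrow k
    simp only [Matrix.mulVec, dotProduct, mul_one] at this
    simp [Matrix.sub_apply, Matrix.one_apply, Finset.sum_sub_distrib, this]
  -- scalar constants
  have ht0 : (0:ℝ) < γ * ρ := mul_pos hγ0 hρ0
  have ht1 : γ * ρ ≤ 1 := by nlinarith
  have hβ0 : (0:ℝ) < γ * ρ / 2 := by linarith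
  have hC0 : (0:ℝ) ≤ C := by rw [hC]; positivity
  have k1 : (1 + γ * ρ / 2) * (1 - γ * ρ) ^ 2 ≤ 1 - γ * ρ / 2 :=
    k1aux (γ * ρ) ht0 ht1
  have k2 : (1 + 1/(γ * ρ / 2)) * (2 * γ ^ 2 * C) ≤ 6 * γ * C / ρ :=
    k2aux γ ρ C hγ0 hρ0 ht1 hC0
  have k3 : (1 + 1/(γ * ρ / 2)) * (2 * η ^ 2) ≤ 6 * η ^ 2 / (γ * ρ) :=
    k3aux (γ * ρ) (η ^ 2) ht0 ht1 (sq_nonneg η)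
  -- reduce to per-row inequality
  rw [Finset.mul_sum, Finset.mul_sum, Finset.mul_sum, ← Finset.sum_add_distrib,
    ← Finset.sum_add_distrib]
  apply Finset.sum_le_sum
  intro i _
  -- row vectors
  set xv : EuclideanSpace ℝ (Fin n) := (WithLp.equiv 2 (Fin n → ℝ)).symm (fun j => X i j)
    with hxv
  set hv : EuclideanSpace ℝ (Fin n) := (WithLp.equiv 2 (Fin n → ℝ)).symm (fun j => H i j)
    with hhv
  set vv : EuclideanSpace ℝ (Fin n) := (WithLp.equiv 2 (Fin n → ℝ)).symm (fun j => V i j)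
    with hvv
  set xpv : EuclideanSpace ℝ (Fin n) := (WithLp.equiv 2 (Fin n → ℝ)).symm (fun j => Xp i j)
    with hxpv
  set Qx : EuclideanSpace ℝ (Fin n) := xv - xbar i • ones with hQx
  set Qv : EuclideanSpace ℝ (Fin n) := vv - vbar i • ones with hQv
  set Qxp : EuclideanSpace ℝ (Fin n) := xpv - xbarp i • ones with hQxp
  -- sum identities
  have e1 : ∑ j, (Xp i j - xbarp i) ^ 2 = ‖Qxp‖ ^ 2 := by
    rw [norm_sq_eq_sum']
    refine Finset.sum_congr rfl fun j _ => ?_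
    simp [hQxp, hxpv, hones]
  have e2 : ∑ j, (X i j - xbar i) ^ 2 = ‖Qx‖ ^ 2 := by
    rw [norm_sq_eq_sum']
    refine Finset.sum_congr rfl fun j _ => ?_
    simp [hQx, hxv, hones]
  have e3 : ∑ j, (H i j - X i j) ^ 2 = ‖hv - xv‖ ^ 2 := by
    rw [norm_sq_eq_sum']
    refine Finset.sum_congr rfl fun j _ => ?_
    simp [hhv, hxv]
  have e4 : ∑ j, (V i j - vbar i) ^ 2 = ‖Qv‖ ^ 2 := by
    rw [norm_sq_eq_sum']
    refine Finset.sum_congr rfl fun j _ => ?_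
    simp [hQv, hvv, hones]
  -- mean-zero of Qx
  have hQx0 : ∑ j, Qx j = 0 := by
    have : ∀ j, Qx j = X i j - xbar i := by
      intro j; simp [hQx, hxv, hones]
    simp only [this, Finset.sum_sub_distrib, Finset.sum_const, Finset.card_univ,
      Fintype.card_fin, nsmul_eq_mul, hxbar]
    field_simp
    ring
  -- update identity
  have hHWsum : ∑ j : Fin n, (H * (W - 1) : Matrix (Fin d) (Fin n) ℝ) i j = 0 := by
    simp only [Matrix.mul_apply]
    rw [Finset.sum_comm]
    simp only [← Finset.mul_sum]
    have : ∀ k, ∑ j, (W - 1) k j = 0 := hrowsum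
    refine Finset.sum_eq_zero fun k _ => ?_
    rw [this k, mul_zero]
  have hmean : xbarp i = xbar i - η * vbar i := by
    rw [hxbarp, hXp]
    simp only [Matrix.sub_apply, Matrix.add_apply, Matrix.smul_apply, smul_eq_mul]
    rw [Finset.sum_sub_distrib, Finset.sum_add_distrib, ← Finset.mul_sum, ← Finset.mul_sum,
      hHWsum, mul_zero, add_zero, hxbar, hvbar]
    ring
  have hxp : xpv = xv + γ • T hv - η • vv := by
    ext j
    have hTj : T hv j = ∑ k, (W - 1) j k * H i k := rfl
    have hm : (H * (W - 1) : Matrix (Fin d) (Fin n) ℝ) i j = ∑ k, (W - 1) j k * H i k := by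
      rw [Matrix.mul_apply]
      refine Finset.sum_congr rfl fun k _ => ?_
      have : (W - 1) k j = (W - 1) j k := by
        simp [Matrix.sub_apply, Matrix.one_apply, hWsym k j, eq_comm]
      rw [this, mul_comm]
    have hl : xpv j = Xp i j := rfl
    rw [hl, hXp]
    simp only [Matrix.sub_apply, Matrix.add_apply, Matrix.smul_apply, smul_eq_mul, hm]
    simp [hxv, hvv, hTj]
  have hsplit : T hv = T Qx + T (hv - xv) := by
    have hzero : hv - Qx - (hv - xv) = (xbar i) • ones := by
      rw [hQx]; module
    have h0 : T (hv - Qx - (hv - xv)) = 0 := by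
      rw [hzero, _root_.map_smul, hTones, smul_zero]
    rw [map_sub, map_sub, sub_sub, sub_eq_zero] at h0
    exact h0
  have key : Qxp = (Qx + γ • T Qx) + (γ • T (hv - xv) - η • Qv) := by
    rw [hQxp, hxp, hmean, hsplit, hQx, hQv]
    module
  -- estimates
  have hA : ‖Qx + γ • T Qx‖ ^ 2 ≤ (1 - γ * ρ) ^ 2 * ‖Qx‖ ^ 2 :=
    contraction_lemma n W hherm hrow ρ γ hρ0 hρ1 hγ0 hγ1 i₀ hi₀ hgap' Qx hQx0
  have hBop : ‖T (hv - xv)‖ ^ 2 ≤ C * ‖hv - xv‖ ^ 2 := by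
    rw [hC]
    have h1 := T.le_opNorm (hv - xv)
    nlinarith [norm_nonneg (T (hv - xv)), norm_nonneg (hv - xv), norm_nonneg T]
  have hB : ‖γ • T (hv - xv) - η • Qv‖ ^ 2 ≤
      2 * γ ^ 2 * C * ‖hv - xv‖ ^ 2 + 2 * η ^ 2 * ‖Qv‖ ^ 2 := by
    have h1 : ‖γ • T (hv - xv) - η • Qv‖ ≤ γ * ‖T (hv - xv)‖ + η * ‖Qv‖ := by
      refine (norm_sub_le _ _).trans ?_
      rw [norm_smul, norm_smul]
      simp [abs_of_pos hγ0, abs_of_pos hη, Real.norm_eq_abs]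
    have h2 : ‖γ • T (hv - xv) - η • Qv‖ ^ 2 ≤ (γ * ‖T (hv - xv)‖ + η * ‖Qv‖) ^ 2 :=
      pow_le_pow_left₀ (norm_nonneg _) h1 2
    nlinarith [sq_nonneg (γ * ‖T (hv - xv)‖ - η * ‖Qv‖),
      mul_le_mul_of_nonneg_left hBop (by positivity : (0:ℝ) ≤ 2 * γ ^ 2)]
  have hY : ‖Qxp‖ ^ 2 ≤ (1 + γ * ρ / 2) * ‖Qx + γ • T Qx‖ ^ 2
      + (1 + 1/(γ * ρ / 2)) * ‖γ • T (hv - xv) - η • Qv‖ ^ 2 := by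
    rw [key]
    exact young_ineq' _ _ _ hβ0
  -- combine
  rw [e1, e2, e3, e4]
  have hβ1 : (0:ℝ) ≤ 1 + γ * ρ / 2 := by linarith
  have hβ2 : (0:ℝ) ≤ 1 + 1/(γ * ρ / 2) := by positivity
  calc ‖Qxp‖ ^ 2
      ≤ (1 + γ * ρ / 2) * ‖Qx + γ • T Qx‖ ^ 2
        + (1 + 1/(γ * ρ / 2)) * ‖γ • T (hv - xv) - η • Qv‖ ^ 2 := hY
    _ ≤ (1 + γ * ρ / 2) * ((1 - γ * ρ) ^ 2 * ‖Qx‖ ^ 2)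
        + (1 + 1/(γ * ρ / 2)) * (2 * γ ^ 2 * C * ‖hv - xv‖ ^ 2 + 2 * η ^ 2 * ‖Qv‖ ^ 2) := by
        gcongr
    _ = ((1 + γ * ρ / 2) * (1 - γ * ρ) ^ 2) * ‖Qx‖ ^ 2
        + ((1 + 1/(γ * ρ / 2)) * (2 * γ ^ 2 * C)) * ‖hv - xv‖ ^ 2
        + ((1 + 1/(γ * ρ / 2)) * (2 * η ^ 2)) * ‖Qv‖ ^ 2 := by ring
    _ ≤ (1 - γ * ρ / 2) * ‖Qx‖ ^ 2 + (6 * γ * C / ρ) * ‖hv - xv‖ ^ 2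
        + (6 * η ^ 2 / (γ * ρ)) * ‖Qv‖ ^ 2 := by
        have m1 := mul_le_mul_of_nonneg_right k1 (sq_nonneg ‖Qx‖)
        have m2 := mul_le_mul_of_nonneg_right k2 (sq_nonneg ‖hv - xv‖)
        have m3 := mul_le_mul_of_nonneg_right k3 (sq_nonneg ‖Qv‖)
        exact add_le_add (add_le_add m1 m2) m3
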